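/- Let G be a finite group, S a Sylow p-subgroup of G, and N a normal subgroup of G. Then SN/N is a Sylow p-subgroup of G/N, and the Frattini subgroup of SN/N equals Φ(S)N/N. -/

import Mathlib

open Subgroup
open scoped commutatorElement

/-- In a finite elementary abelian `p`-group, the Frattini subgroup is trivial. -/
lemma aux_frattini_eq_bot {Q : Type*} [CommGroup Q] [Finite Q] {p : ℕ} (hp : p.Prime)
    (hpow : ∀ a : Q, a ^ p = 1) : frattini Q = ⊥ := by
  rw [eq_bot_iff]
  intro x hx
  simp only [Subgroup.mem_bot]
  by_contra hx1
  obtain ⟨M, hM, hMmax0⟩ := Set.Finite.exists_maximalFor id {H : Subgroup Q | x ∉ H}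
    (Set.toFinite _) ⟨⊥, by simpa using hx1⟩
  simp only [Set.mem_setOf_eq, id] at hM hMmax0
  have hMmax : ∀ K : Subgroup Q, x ∉ K → M ≤ K → M = K :=
    fun K h1 h2 => le_antisymm h2 (hMmax0 h1 h2)
  have hcoatom : IsCoatom M := by
    refine ⟨fun h => hM (h ▸ mem_top x), fun K hK => ?_⟩
    have hxK : x ∈ K := by
      by_contra h
      exact hK.ne (hMmax K h hK.le)
    rw [eq_top_iff']
    intro y
    by_cases hyM : y ∈ M
    · exact hK.le hyM
    have h1 : x ∈ M ⊔ zpowers y := by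
      by_contra h
      have h2 := hMmax _ h le_sup_left
      exact hyM (h2 ▸ mem_sup_right (mem_zpowers y))
    obtain ⟨m, hm, z, hz, hmz⟩ := mem_sup.mp h1
    obtain ⟨k, rfl⟩ := hz
    dsimp only at hmz
    have hyp1 : y ^ (p : ℤ) = 1 := by
      rw [zpow_natCast, hpow]
    have hykK : y ^ k ∈ K := by
      have : y ^ k = m⁻¹ * x := by rw [← hmz]; group
      rw [this]
      exact mul_mem (inv_mem (hK.le hm)) hxK
    by_cases hdvd : (p : ℤ) ∣ k
    · obtain ⟨c, rfl⟩ := hdvd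
      rw [zpow_mul, hyp1, one_zpow, mul_one] at hmz
      exact absurd (hmz ▸ hm) hM
    · obtain ⟨a, b, hab⟩ := ((Nat.prime_iff_prime_int.mp hp).coprime_iff_not_dvd.mpr hdvd).symm
      have : y = (y ^ k) ^ a * (y ^ (p : ℤ)) ^ b := by
        rw [← zpow_mul, ← zpow_mul, ← zpow_add, mul_comm k a, mul_comm (p : ℤ) b]
        rw [hab, zpow_one]
      rw [this, hyp1, one_zpow, mul_one]
      exact zpow_mem hykK a
  exact hM (frattini_le_coatom hcoatom hx)

/-- For a finite `p`-group, the Frattini subgroup is `P^p [P,P]`. -/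
lemma aux_frattini_pGroup {P : Type*} [Group P] [Finite P] {p : ℕ} [hp : Fact p.Prime]
    (h : IsPGroup p P) :
    frattini P = ⁅(⊤ : Subgroup P), ⊤⁆ ⊔ Subgroup.closure (Set.range fun x : P => x ^ p) := by
  have hclnormal : (Subgroup.closure (Set.range fun x : P => x ^ p)).Normal := by
    constructor
    intro n hn g
    refine Subgroup.closure_induction ?_ ?_ ?_ ?_ hn
    · rintro _ ⟨x, rfl⟩
      refine Subgroup.subset_closure ⟨g * x * g⁻¹, ?_⟩
      simp [conj_pow]
    · simpa using Subgroup.one_mem _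
    · intro a b _ _ ha hb
      have : g * (a * b) * g⁻¹ = (g * a * g⁻¹) * (g * b * g⁻¹) := by group
      rw [this]; exact mul_mem ha hb
    · intro a _ ha
      have : g * a⁻¹ * g⁻¹ = (g * a * g⁻¹)⁻¹ := by group
      rw [this]; exact inv_mem ha
  set V := ⁅(⊤ : Subgroup P), ⊤⁆ ⊔ Subgroup.closure (Set.range fun x : P => x ^ p) with hV
  -- key fact about coatoms
  have key : ∀ M : Subgroup P, IsCoatom M → V ≤ M := by
    intro M hM
    haveI : Group.IsNilpotent P := h.isNilpotent
    haveI hMnormal : M.Normal :=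
      NormalizerCondition.normal_of_coatom M (normalizerCondition_of_isNilpotent (G := P)) hM
    have hcyc : ∀ g : P ⧸ M, g ≠ 1 → Subgroup.zpowers g = ⊤ := by
      intro g hg
      obtain ⟨x, rfl⟩ := QuotientGroup.mk'_surjective M g
      have h1 : M < Subgroup.comap (QuotientGroup.mk' M) (Subgroup.zpowers (QuotientGroup.mk' M x)) := by
        refine lt_of_le_of_ne ?_ ?_
        · intro m hm
          rw [Subgroup.mem_comap]
          have : QuotientGroup.mk' M m = 1 := (QuotientGroup.eq_one_iff m).mpr hm
          rw [this]; exact one_mem _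
        · intro he
          have hx : x ∈ Subgroup.comap (QuotientGroup.mk' M) (Subgroup.zpowers (QuotientGroup.mk' M x)) :=
            Subgroup.mem_comap.mpr (Subgroup.mem_zpowers _)
          rw [← he] at hx
          exact hg ((QuotientGroup.eq_one_iff x).mpr hx)
      have h2 := hM.2 _ h1
      have h3 := Subgroup.map_comap_eq_self_of_surjective (f := QuotientGroup.mk' M)
        (QuotientGroup.mk'_surjective M) (Subgroup.zpowers (QuotientGroup.mk' M x))
      rw [h2] at h3
      rw [← h3]
      exact Subgroup.map_top_of_surjective _ (QuotientGroup.mk'_surjective M)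
    have hcomm : ∀ a b : P ⧸ M, a * b = b * a := by
      intro a b
      rcases eq_or_ne a 1 with rfl | ha
      · simp
      · have hb : b ∈ Subgroup.zpowers a := (hcyc a ha) ▸ Subgroup.mem_top b
        obtain ⟨k, rfl⟩ := hb
        dsimp only
        exact ((Commute.refl a).zpow_right k).eq
    have hq : IsPGroup p (P ⧸ M) := h.to_quotient M
    have hpow : ∀ g : P ⧸ M, g ^ p = 1 := by
      intro g
      by_contra hgp
      have hg : g ≠ 1 := fun hg => hgp (by rw [hg, one_pow])
      have h4 : g ∈ Subgroup.zpowers (g ^ p) := (hcyc _ hgp) ▸ Subgroup.mem_top g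
      obtain ⟨m, hm⟩ := h4
      dsimp only at hm
      have h5 : g ^ ((p : ℤ) * m - 1) = 1 := by
        rw [zpow_sub, zpow_mul, zpow_natCast, zpow_one]
        rw [hm]
        exact mul_inv_cancel g
      have h6 : (orderOf g : ℤ) ∣ (p : ℤ) * m - 1 := orderOf_dvd_iff_zpow_eq_one.mpr h5
      obtain ⟨k, hk⟩ := hq g
      have h7 : orderOf g ∣ p ^ k := orderOf_dvd_of_pow_eq_one hk
      have h8 : p ∣ orderOf g := by
        rcases (Nat.dvd_prime_pow hp.out).mp h7 with ⟨j, hj, hje⟩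
        rcases Nat.eq_zero_or_pos j with rfl | hjpos
        · simp at hje
          exact absurd hje hg
        · exact hje ▸ dvd_pow_self p hjpos.ne'
      have h9 : (p : ℤ) ∣ (p : ℤ) * m - 1 := dvd_trans (Int.natCast_dvd_natCast.mpr h8) h6
      have h10 : (p : ℤ) ∣ 1 := by
        simpa using dvd_sub (⟨m, rfl⟩ : (p : ℤ) ∣ (p : ℤ) * m) h9
      have h11 : p ∣ 1 := by exact_mod_cast h10
      exact hp.out.one_lt.ne' (Nat.dvd_one.mp h11)
    rw [hV, sup_le_iff]
    constructor
    · rw [Subgroup.commutator_le]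
      intro g1 _ g2 _
      have : QuotientGroup.mk' M ⁅g1, g2⁆ = 1 := by
        rw [map_commutatorElement, commutatorElement_def]
        rw [hcomm (QuotientGroup.mk' M g1) (QuotientGroup.mk' M g2)]
        group
      exact (QuotientGroup.eq_one_iff _).mp this
    · rw [Subgroup.closure_le]
      rintro _ ⟨x, rfl⟩
      have : QuotientGroup.mk' M (x ^ p) = 1 := by
        rw [map_pow]; exact hpow _
      exact (QuotientGroup.eq_one_iff _).mp this
  refine le_antisymm ?_ (le_iInf₂ fun M hM => key M hM)
  · -- frattini P ≤ V
    haveI : V.Normal := Subgroup.sup_normal _ _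
    letI cg : CommGroup (P ⧸ V) :=
      { (inferInstance : Group (P ⧸ V)) with
        mul_comm := by
          intro a b
          obtain ⟨x, rfl⟩ := QuotientGroup.mk'_surjective V a
          obtain ⟨y, rfl⟩ := QuotientGroup.mk'_surjective V b
          rw [← map_mul, ← map_mul, QuotientGroup.mk'_apply, QuotientGroup.mk'_apply,
            QuotientGroup.eq]
          have hcomm' : (x * y)⁻¹ * (y * x) = ⁅y⁻¹, x⁻¹⁆ := by
            rw [commutatorElement_def]; group
          rw [hcomm']
          exact le_sup_left (α := Subgroup P)
            (Subgroup.commutator_mem_commutator (Subgroup.mem_top _) (Subgroup.mem_top _)) }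
    have hpowq : ∀ a : P ⧸ V, a ^ p = 1 := by
      intro a
      obtain ⟨x, rfl⟩ := QuotientGroup.mk'_surjective V a
      rw [← map_pow]
      exact (QuotientGroup.eq_one_iff _).mpr
        (le_sup_right (α := Subgroup P) (Subgroup.subset_closure ⟨x, rfl⟩))
    have hbot : frattini (P ⧸ V) = ⊥ := aux_frattini_eq_bot hp.out hpowq
    have := frattini_le_comap_frattini_of_surjective (φ := QuotientGroup.mk' V)
      (QuotientGroup.mk'_surjective V)
    rw [hbot, MonoidHom.comap_bot, QuotientGroup.ker_mk'] at this
    exact this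

lemma aux_himg {K : Type*} [Group K] (p : ℕ) (H : Subgroup K) :
    H.subtype '' (Set.range fun x : H => x ^ p) = (fun y => y ^ p) '' (H : Set K) := by
  ext z
  constructor
  · rintro ⟨_, ⟨a, rfl⟩, rfl⟩
    exact ⟨a, a.2, by simp⟩
  · rintro ⟨y, hy, rfl⟩
    exact ⟨(⟨y, hy⟩ : H) ^ p, ⟨⟨y, hy⟩, rfl⟩, by simp⟩

lemma aux_map_frattini {G G' : Type*} [Group G] [Group G'] [Finite G] {p : ℕ} [hp : Fact p.Prime]
    (f : G →* G') (P : Subgroup G) (hP : IsPGroup p P) :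
    (frattini ↥(P.map f)).map (P.map f).subtype =
      Subgroup.map f ((frattini ↥P).map P.subtype) := by
  haveI : Finite ↥(P.map f) :=
    Set.Finite.to_subtype (Set.Finite.image f (Set.toFinite (P : Set G)))
  rw [aux_frattini_pGroup hP, aux_frattini_pGroup (hP.map f)]
  rw [Subgroup.map_sup, Subgroup.map_sup, Subgroup.map_sup, Subgroup.map_commutator,
    Subgroup.map_commutator, Subgroup.map_commutator, MonoidHom.map_closure,
    MonoidHom.map_closure, MonoidHom.map_closure]
  rw [← MonoidHom.range_eq_map, ← MonoidHom.range_eq_map, Subgroup.range_subtype,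
    Subgroup.range_subtype]
  rw [aux_himg p, aux_himg p, Set.image_image]
  congr 1
  rw [Subgroup.coe_map, Set.image_image]
  exact congrArg Subgroup.closure (Set.image_congr' fun x => (map_pow f x p).symm)

/-- If `S` is a Sylow `p`-subgroup of a finite group `G` and `N ⊴ G`, then `SN/N` is a
Sylow `p`-subgroup of `G/N`, and `Φ(SN/N) = Φ(S)N/N`. -/
theorem sylow_quotient_and_frattini {G : Type*} [Group G] [Finite G] {p : ℕ} [Fact p.Prime]
    (S : Sylow p G) (N : Subgroup G) [N.Normal] :
    ∃ T : Sylow p (G ⧸ N),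
      (T : Subgroup (G ⧸ N)) = Subgroup.map (QuotientGroup.mk' N) (S : Subgroup G) ∧
      (frattini ↥(T : Subgroup (G ⧸ N))).map (T : Subgroup (G ⧸ N)).subtype =
        Subgroup.map (QuotientGroup.mk' N)
          ((frattini ↥(S : Subgroup G)).map (S : Subgroup G).subtype) := by
  refine ⟨S.mapSurjective (QuotientGroup.mk'_surjective N), ?_, ?_⟩
  · exact Sylow.coe_mapSurjective (QuotientGroup.mk'_surjective N) S
  · rw [Sylow.coe_mapSurjective]
    exact aux_map_frattini (QuotientGroup.mk' N) (S : Subgroup G) S.2
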